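/- arXiv:2510.06986 — 6 statements merged into one kernel-verified Lean document; each statement's English description precedes it below -/
import Mathlib

section
/- Let X be a nonempty convex subset of ℝⁿ, let α > 0, and let f : X → ℝ be α-strongly concave on X (i.e. x ↦ f(x) + (α/2)‖x‖² is concave on X). Let g : X → ℝ satisfy |f(x) − g(x)| ≤ ε for all x ∈ X, for some ε ≥ 0. If x* maximizes f over X and y* maximizes g over X, then ‖x* − y*‖ ≤ 2·√(ε/α). -/
open RealInnerProductSpace

lemma norm_combo_sq_aux {E : Type*} [NormedAddCommGroup E] [InnerProductSpace ℝ E]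
    (x y : E) (a b : ℝ) (hab : a + b = 1) :
    ‖a • x + b • y‖ ^ 2 = a * ‖x‖ ^ 2 + b * ‖y‖ ^ 2 - a * b * ‖x - y‖ ^ 2 := by
  have h1 : ‖a • x + b • y‖ ^ 2
      = ‖a • x‖ ^ 2 + 2 * ⟪a • x, b • y⟫ + ‖b • y‖ ^ 2 := norm_add_sq_real _ _
  have h2 : ‖x - y‖ ^ 2 = ‖x‖ ^ 2 - 2 * ⟪x, y⟫ + ‖y‖ ^ 2 := norm_sub_sq_real _ _
  have h3 : ⟪a • x, b • y⟫ = a * b * ⟪x, y⟫ := by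
    rw [real_inner_smul_left, real_inner_smul_right]; ring
  have h4 : ‖a • x‖ ^ 2 = a ^ 2 * ‖x‖ ^ 2 := by
    rw [norm_smul]; simp [mul_pow]
  have h5 : ‖b • y‖ ^ 2 = b ^ 2 * ‖y‖ ^ 2 := by
    rw [norm_smul]; simp [mul_pow]
  have hb : b = 1 - a := by linarith
  subst hb
  rw [h1, h3, h4, h5, h2]
  ring

/-- Lipschitz stability of maximizers of strongly concave objectives under
uniform objective perturbation: if `f` is `α`-strongly concave on a convex set
`X`, `|f − g| ≤ ε` on `X`, `x*` maximizes `f` on `X` and `y*` maximizes `g` on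
`X`, then `‖x* − y*‖ ≤ 2√(ε/α)`. -/
theorem maximizer_stability_strongly_concave
    (n : ℕ) (X : Set (EuclideanSpace ℝ (Fin n)))
    (hne : X.Nonempty) (hconv : Convex ℝ X)
    (α : ℝ) (hα : 0 < α)
    (f g : EuclideanSpace ℝ (Fin n) → ℝ)
    (hsc : ConcaveOn ℝ X (fun x => f x + (α / 2) * ‖x‖ ^ 2))
    (ε : ℝ) (hε : 0 ≤ ε)
    (hfg : ∀ x ∈ X, |f x - g x| ≤ ε)
    (xstar ystar : EuclideanSpace ℝ (Fin n))
    (hxmem : xstar ∈ X) (hymem : ystar ∈ X)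
    (hxmax : ∀ x ∈ X, f x ≤ f xstar)
    (hymax : ∀ x ∈ X, g x ≤ g ystar) :
    ‖xstar - ystar‖ ≤ 2 * Real.sqrt (ε / α) := by
  set d : ℝ := ‖xstar - ystar‖ with hd
  have hd0 : 0 ≤ d := norm_nonneg _
  -- quadratic growth at the maximizer of f
  have key : ∀ t : ℝ, 0 < t → t < 1 →
      α / 2 * (1 - t) * d ^ 2 ≤ f xstar - f ystar := by
    intro t ht0 ht1
    have ha : (0:ℝ) ≤ 1 - t := by linarith
    have hb : (0:ℝ) ≤ t := le_of_lt ht0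
    have hab : (1 - t) + t = 1 := by ring
    have hcc := hsc.2 hxmem hymem ha hb hab
    have hz : (1 - t) • xstar + t • ystar ∈ X := hconv hxmem hymem ha hb hab
    have hfz : f ((1 - t) • xstar + t • ystar) ≤ f xstar := hxmax _ hz
    have hnorm := norm_combo_sq_aux xstar ystar (1 - t) t hab
    simp only [smul_eq_mul] at hcc
    rw [hnorm, ← hd] at hcc
    have h6 : t * (α / 2 * (1 - t) * d ^ 2) ≤ t * (f xstar - f ystar) := by
      nlinarith [hcc, hfz]
    exact le_of_mul_le_mul_left h6 ht0
  have key2 : α / 2 * d ^ 2 ≤ f xstar - f ystar := by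
    refine le_of_forall_pos_le_add ?_
    intro δ hδ
    rcases le_or_gt (α / 2 * d ^ 2) δ with h | h
    · calc α / 2 * d ^ 2 ≤ δ := h
        _ ≤ f xstar - f ystar + δ := by
            have := key (1/2) (by norm_num) (by norm_num)
            nlinarith [sq_nonneg d]
    · set t : ℝ := δ / (α / 2 * d ^ 2) with ht
      have hden : 0 < α / 2 * d ^ 2 := lt_trans hδ h
      have ht0 : 0 < t := div_pos hδ hden
      have ht1 : t < 1 := (div_lt_one hden).mpr h
      have := key t ht0 ht1
      have htt : t * (α / 2 * d ^ 2) = δ := div_mul_cancel₀ δ hden.ne'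
      nlinarith
  -- f xstar - f ystar ≤ 2ε
  have hval : f xstar - f ystar ≤ 2 * ε := by
    have h1 := abs_le.mp (hfg xstar hxmem)
    have h2 := abs_le.mp (hfg ystar hymem)
    have h3 := hymax xstar hxmem
    linarith [h1.1, h1.2, h2.1, h2.2]
  have hsq : d ^ 2 ≤ 4 * (ε / α) := by
    rw [show (4:ℝ) * (ε / α) = 4 * ε / α by ring, le_div_iff₀ hα]
    nlinarith [key2, hval]
  have hε' : 0 ≤ ε / α := div_nonneg hε (le_of_lt hα)
  have : d ≤ Real.sqrt (4 * (ε / α)) := by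
    rw [show (4 : ℝ) * (ε / α) = (2 * Real.sqrt (ε / α)) ^ 2 by
      rw [mul_pow, Real.sq_sqrt hε']; ring] at hsq
    calc d = Real.sqrt (d ^ 2) := (Real.sqrt_sq hd0).symm
      _ ≤ Real.sqrt ((2 * Real.sqrt (ε / α)) ^ 2) := Real.sqrt_le_sqrt hsq
      _ = Real.sqrt (4 * (ε / α)) := by
          rw [mul_pow, Real.sq_sqrt hε']; ring_nf
  calc d ≤ Real.sqrt (4 * (ε / α)) := this
    _ = 2 * Real.sqrt (ε / α) := by
        rw [show (4:ℝ) * (ε/α) = 2^2 * (ε/α) by ring, Real.sqrt_mul (by positivity),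
          Real.sqrt_sq (by norm_num)]
end

section
/- Let x, μ̄ ∈ ℝⁿ, let Σ̄ ∈ ℝⁿˣⁿ, let θ ≥ 0, and let δ_μ, δ_Σ ≥ 0. Then the minimum of μᵀx − (θ/2)·xᵀΣx over all pairs (μ, Σ) with ‖μ − μ̄‖₂ ≤ δ_μ and ‖Σ − Σ̄‖_F ≤ δ_Σ equals μ̄ᵀx − δ_μ·‖x‖₂ − (θ/2)·xᵀΣ̄x − (θ/2)·δ_Σ·‖x‖₂², and this minimum is attained. -/
open Matrix

private lemma cs_sum_mul {n : ℕ} (v w : Fin n → ℝ) :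
    ∑ i, v i * w i ≤ Real.sqrt (∑ i, v i ^ 2) * Real.sqrt (∑ i, w i ^ 2) := by
  have h := Finset.sum_mul_sq_le_sq_mul_sq Finset.univ v w
  calc ∑ i, v i * w i ≤ |∑ i, v i * w i| := le_abs_self _
    _ = Real.sqrt ((∑ i, v i * w i) ^ 2) := (Real.sqrt_sq_eq_abs _).symm
    _ ≤ Real.sqrt ((∑ i, v i ^ 2) * ∑ i, w i ^ 2) := Real.sqrt_le_sqrt h
    _ = _ := Real.sqrt_mul (Finset.sum_nonneg fun i _ => sq_nonneg _) _

private lemma quad_bound {n : ℕ} (x : Fin n → ℝ) (Δ : Matrix (Fin n) (Fin n) ℝ) :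
    x ⬝ᵥ Δ.mulVec x ≤ Real.sqrt (∑ i, ∑ j, Δ i j ^ 2) * (∑ i, x i ^ 2) := by
  have hxs : (0:ℝ) ≤ ∑ i, x i ^ 2 := Finset.sum_nonneg fun i _ => sq_nonneg _
  have h1 : x ⬝ᵥ Δ.mulVec x ≤
      Real.sqrt (∑ i, x i ^ 2) * Real.sqrt (∑ i, (Δ.mulVec x i) ^ 2) :=
    cs_sum_mul x (Δ.mulVec x)
  have h2 : ∑ i, (Δ.mulVec x i) ^ 2 ≤ (∑ i, ∑ j, Δ i j ^ 2) * (∑ j, x j ^ 2) := by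
    rw [Finset.sum_mul]
    refine Finset.sum_le_sum fun i _ => ?_
    simpa [Matrix.mulVec, dotProduct] using
      Finset.sum_mul_sq_le_sq_mul_sq Finset.univ (fun j => Δ i j) x
  calc x ⬝ᵥ Δ.mulVec x
      ≤ Real.sqrt (∑ i, x i ^ 2) * Real.sqrt (∑ i, (Δ.mulVec x i) ^ 2) := h1
    _ ≤ Real.sqrt (∑ i, x i ^ 2) *
        Real.sqrt ((∑ i, ∑ j, Δ i j ^ 2) * (∑ j, x j ^ 2)) := by
        exact mul_le_mul_of_nonneg_left (Real.sqrt_le_sqrt h2) (Real.sqrt_nonneg _)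
    _ = Real.sqrt (∑ i, ∑ j, Δ i j ^ 2) * (∑ i, x i ^ 2) := by
        rw [Real.sqrt_mul (x := ∑ i, ∑ j, Δ i j ^ 2) (Finset.sum_nonneg fun i _ => Finset.sum_nonneg
          fun j _ => sq_nonneg _)]
        calc Real.sqrt (∑ i, x i ^ 2) *
            (Real.sqrt (∑ i, ∑ j, Δ i j ^ 2) * Real.sqrt (∑ j, x j ^ 2))
            = Real.sqrt (∑ i, ∑ j, Δ i j ^ 2) *
              (Real.sqrt (∑ i, x i ^ 2) * Real.sqrt (∑ i, x i ^ 2)) := by ring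
          _ = _ := by rw [Real.mul_self_sqrt hxs]

/-- Closed-form inner minimization of the distributionally robust objective:
the minimum of `μᵀx − (θ/2)xᵀΣx` over the uncertainty set
`{(μ, Σ) : ‖μ − μ̄‖₂ ≤ δ_μ, ‖Σ − Σ̄‖_F ≤ δ_Σ}` equals
`μ̄ᵀx − δ_μ‖x‖₂ − (θ/2)xᵀΣ̄x − (θ/2)δ_Σ‖x‖₂²`, and it is attained. -/
theorem robust_objective_inner_minimization
    (n : ℕ) (x μbar : EuclideanSpace ℝ (Fin n))
    (Sbar : Matrix (Fin n) (Fin n) ℝ)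
    (θ : ℝ) (hθ : 0 ≤ θ) (δmu δS : ℝ) (hδmu : 0 ≤ δmu) (hδS : 0 ≤ δS) :
    IsLeast
      {y : ℝ | ∃ (μ : EuclideanSpace ℝ (Fin n)) (S : Matrix (Fin n) (Fin n) ℝ),
          ‖μ - μbar‖ ≤ δmu ∧
          Real.sqrt (∑ i, ∑ j, (S i j - Sbar i j) ^ 2) ≤ δS ∧
          y = μ ⬝ᵥ x - θ / 2 * (x ⬝ᵥ S.mulVec x)}
      (μbar ⬝ᵥ x - δmu * ‖x‖ - θ / 2 * (x ⬝ᵥ Sbar.mulVec x) - θ / 2 * δS * ‖x‖ ^ 2) := by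
  classical
  have hxnorm : ‖x‖ = Real.sqrt (∑ i, x i ^ 2) := by
    simpa using EuclideanSpace.norm_eq x
  have hxs : (0:ℝ) ≤ ∑ i, x i ^ 2 := Finset.sum_nonneg fun i _ => sq_nonneg _
  have hxsq : ‖x‖ ^ 2 = ∑ i, x i ^ 2 := by
    rw [hxnorm, Real.sq_sqrt hxs]
  constructor
  · -- membership: the minimum is attained
    by_cases hx : x = 0
    · refine ⟨μbar, Sbar, by simp [hδmu], by simp [hδS], ?_⟩
      have : ∀ i, (x : Fin n → ℝ) i = 0 := fun i => by rw [hx]; rfl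
      simp [dotProduct, hx, norm_zero, this, Matrix.mulVec]
    · have hxn : 0 < ‖x‖ := norm_pos_iff.mpr hx
      refine ⟨μbar - (δmu / ‖x‖) • x,
        Sbar + Matrix.of (fun i j => (δS / ‖x‖ ^ 2) * (x i * x j)), ?_, ?_, ?_⟩
      · have : ‖(μbar - (δmu / ‖x‖) • x) - μbar‖ = δmu / ‖x‖ * ‖x‖ := by
          rw [sub_sub_cancel_left, norm_neg, norm_smul]
          congr 1
          exact abs_of_nonneg (div_nonneg hδmu hxn.le)
        rw [this, div_mul_cancel₀ _ hxn.ne']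
      · have hc : ∀ i j : Fin n,
            ((Sbar + Matrix.of fun i j => (δS / ‖x‖ ^ 2) * (x i * x j)) i j - Sbar i j) ^ 2
            = (δS / ‖x‖ ^ 2) ^ 2 * (x i ^ 2 * x j ^ 2) := by
          intro i j; simp only [Matrix.add_apply, Matrix.of_apply]; ring
        have hsum : (∑ i, ∑ j, ((Sbar + Matrix.of fun i j =>
            (δS / ‖x‖ ^ 2) * (x i * x j)) i j - Sbar i j) ^ 2)
            = δS ^ 2 := by
          have hs2 : (‖x‖ : ℝ) ^ 2 ≠ 0 := pow_ne_zero 2 hxn.ne'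
          simp_rw [hc, ← Finset.mul_sum, ← Finset.sum_mul, ← hxsq, div_pow]
          rw [div_mul_eq_mul_div, mul_comm,
            show ‖x‖ ^ 2 * ‖x‖ ^ 2 * δS ^ 2 = δS ^ 2 * (‖x‖ ^ 2) ^ 2 from by ring,
            mul_div_assoc, div_self (pow_ne_zero 2 hs2), mul_one]
        rw [hsum, Real.sqrt_sq hδS]
      · have hdot : ((μbar - (δmu / ‖x‖) • x : EuclideanSpace ℝ (Fin n)) : Fin n → ℝ) ⬝ᵥ x
            = μbar ⬝ᵥ x - δmu * ‖x‖ := by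
          simp only [dotProduct, PiLp.sub_apply, PiLp.smul_apply, smul_eq_mul,
            sub_mul, Finset.sum_sub_distrib]
          congr 1
          have h1 : ∀ i, δmu / ‖x‖ * x i * x i = δmu / ‖x‖ * x i ^ 2 := fun i => by ring
          simp_rw [h1, ← Finset.mul_sum, ← hxsq]
          field_simp
        have hquad : x ⬝ᵥ (Sbar + Matrix.of fun i j =>
            (δS / ‖x‖ ^ 2) * (x i * x j)).mulVec x
            = x ⬝ᵥ Sbar.mulVec x + δS * ‖x‖ ^ 2 := by
          rw [Matrix.add_mulVec, dotProduct_add]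
          congr 1
          simp only [Matrix.mulVec, dotProduct, Matrix.of_apply]
          have : ∀ i, ∑ j, (δS / ‖x‖ ^ 2) * (x i * x j) * x j
              = (δS / ‖x‖ ^ 2) * x i * ∑ j, x j ^ 2 := by
            intro i
            rw [Finset.mul_sum]
            exact Finset.sum_congr rfl fun j _ => by ring
          simp_rw [this]
          rw [← hxsq]
          have h2 : ∀ i, x i * (δS / ‖x‖ ^ 2 * x i * ‖x‖ ^ 2) = δS * x i ^ 2 := by
            intro i
            field_simp
          simp_rw [h2, ← Finset.mul_sum, ← hxsq]
        rw [hdot, hquad]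
        ring
  · -- lower bound
    rintro y ⟨μ, S, hμ, hS, rfl⟩
    have hA : μbar ⬝ᵥ x - δmu * ‖x‖ ≤ μ ⬝ᵥ x := by
      have h1 : (μbar ⬝ᵥ x) - (μ ⬝ᵥ x) = ∑ i, (μbar i - μ i) * x i := by
        simp [dotProduct, sub_mul, Finset.sum_sub_distrib]
      have h2 : ∑ i, (μbar i - μ i) * x i ≤
          Real.sqrt (∑ i, (μbar i - μ i) ^ 2) * Real.sqrt (∑ i, x i ^ 2) :=
        cs_sum_mul _ _
      have h3 : Real.sqrt (∑ i, (μbar i - μ i) ^ 2) = ‖μ - μbar‖ := by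
        rw [show ‖μ - μbar‖ = Real.sqrt (∑ i, ((μ - μbar) i) ^ 2) from by
          simpa using EuclideanSpace.norm_eq (μ - μbar)]
        congr 1
        refine Finset.sum_congr rfl fun i _ => ?_
        have : ((μ - μbar : EuclideanSpace ℝ (Fin n)) : Fin n → ℝ) i = μ i - μbar i := rfl
        rw [this]; ring
      have h4 : (μbar ⬝ᵥ x) - (μ ⬝ᵥ x) ≤ δmu * ‖x‖ := by
        rw [h1]
        calc ∑ i, (μbar i - μ i) * x i
            ≤ Real.sqrt (∑ i, (μbar i - μ i) ^ 2) * Real.sqrt (∑ i, x i ^ 2) := h2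
          _ = ‖μ - μbar‖ * ‖x‖ := by rw [h3, ← hxnorm]
          _ ≤ δmu * ‖x‖ := mul_le_mul_of_nonneg_right hμ (norm_nonneg _)
      linarith
    have hB : x ⬝ᵥ S.mulVec x ≤ x ⬝ᵥ Sbar.mulVec x + δS * ‖x‖ ^ 2 := by
      have hΔ := quad_bound (x : Fin n → ℝ) (S - Sbar)
      have hsplit : x ⬝ᵥ S.mulVec x = x ⬝ᵥ Sbar.mulVec x + x ⬝ᵥ (S - Sbar).mulVec x := by
        rw [Matrix.sub_mulVec, dotProduct_sub]; ring
      have hF : Real.sqrt (∑ i, ∑ j, (S - Sbar) i j ^ 2) ≤ δS := by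
        simpa [Matrix.sub_apply] using hS
      have : x ⬝ᵥ (S - Sbar).mulVec x ≤ δS * ‖x‖ ^ 2 := by
        calc x ⬝ᵥ (S - Sbar).mulVec x
            ≤ Real.sqrt (∑ i, ∑ j, (S - Sbar) i j ^ 2) * (∑ i, x i ^ 2) := hΔ
          _ ≤ δS * (∑ i, x i ^ 2) := mul_le_mul_of_nonneg_right hF hxs
          _ = δS * ‖x‖ ^ 2 := by rw [hxsq]
      linarith
    have hθ2 : (0:ℝ) ≤ θ / 2 := by linarith
    nlinarith [mul_le_mul_of_nonneg_left hB hθ2]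
end

section
/- Let p > 1 and let κ₁, κ₂ ∈ ℝⁿ parameterize the nonlinear transaction costs φ_κ(x) = Σⱼ κⱼ·xⱼᵖ on the nonnegative orthant, whose gradient has coordinates p·κⱼ·xⱼ^{p−1}. For t = 1,…,T let Σᵗ ∈ ℝⁿˣⁿ be symmetric positive definite matrices and xᵗ ∈ ℝⁿ portfolios with xᵗ ≥ 0, and suppose θ₁, θ₂ ∈ ℝ satisfy, for every t and every coordinate j, θ₁·(Σᵗxᵗ)ⱼ + p·κ₁ⱼ·(xᵗⱼ)^{p−1} = θ₂·(Σᵗxᵗ)ⱼ + p·κ₂ⱼ·(xᵗⱼ)^{p−1}. If (i) there exist indices s, t and a coordinate j with xᵗⱼ = xˢⱼ and (Σᵗxᵗ)ⱼ ≠ (Σˢxˢ)ⱼ, then θ₁ = θ₂; and (ii) if additionally for a coordinate j there exists t with xᵗⱼ > 0, then κ₁ⱼ = κ₂ⱼ. -/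
open Matrix

/-- Identifiability with nonlinear power transaction costs (Proposition A.1):
with costs `φ_κ(x) = Σⱼ κⱼ xⱼᵖ` (`p > 1`) on the nonnegative orthant, whose
gradient has coordinates `p κⱼ xⱼ^{p−1}`, suppose two parameter pairs
`(θ₁, κ₁)` and `(θ₂, κ₂)` satisfy the same coordinatewise stationarity system.
(i) If there exist observations `s, t` and a coordinate `j` with
`xᵗⱼ = xˢⱼ` and `(Σᵗxᵗ)ⱼ ≠ (Σˢxˢ)ⱼ`, then `θ₁ = θ₂`; and (ii) additionally,
for every coordinate `j` such that `xᵗⱼ > 0` for some `t`, `κ₁ⱼ = κ₂ⱼ`. -/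
theorem identifiability_nonlinear_costs
    (n T : ℕ) (p : ℝ) (hp : 1 < p)
    (κ₁ κ₂ : Fin n → ℝ)
    (S : Fin T → Matrix (Fin n) (Fin n) ℝ)
    (hSym : ∀ t, (S t).IsSymm)
    (hPD : ∀ t, (S t).PosDef)
    (x : Fin T → (Fin n → ℝ))
    (hxnonneg : ∀ t i, 0 ≤ x t i)
    (θ₁ θ₂ : ℝ)
    (hstat : ∀ (t : Fin T) (j : Fin n),
        θ₁ * (S t).mulVec (x t) j + p * κ₁ j * (x t j) ^ (p - 1) =
        θ₂ * (S t).mulVec (x t) j + p * κ₂ j * (x t j) ^ (p - 1))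
    (hvar : ∃ (s t : Fin T) (j : Fin n),
        x t j = x s j ∧ (S t).mulVec (x t) j ≠ (S s).mulVec (x s) j) :
    θ₁ = θ₂ ∧ ∀ j : Fin n, (∃ t : Fin T, 0 < x t j) → κ₁ j = κ₂ j := by
  obtain ⟨s, t, j, hxe, hSne⟩ := hvar
  have h1 := hstat t j
  have h2 := hstat s j
  rw [hxe] at h1
  have hθ : θ₁ = θ₂ := by
    have key : θ₁ * ((S t).mulVec (x t) j - (S s).mulVec (x s) j)
        = θ₂ * ((S t).mulVec (x t) j - (S s).mulVec (x s) j) := by ring_nf; nlinarith [h1, h2]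
    have hne : (S t).mulVec (x t) j - (S s).mulVec (x s) j ≠ 0 := sub_ne_zero.mpr hSne
    exact mul_right_cancel₀ hne key
  refine ⟨hθ, fun j ⟨t, hxt⟩ => ?_⟩
  have h := hstat t j
  rw [hθ] at h
  have hcancel : p * κ₁ j * (x t j) ^ (p - 1) = p * κ₂ j * (x t j) ^ (p - 1) := by
    linarith
  have hpow : (0:ℝ) < (x t j) ^ (p - 1) := Real.rpow_pos_of_pos hxt _
  have hp0 : (0:ℝ) < p := lt_trans one_pos hp
  have := mul_right_cancel₀ (ne_of_gt hpow) hcancel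
  exact mul_left_cancel₀ (ne_of_gt hp0) this
end

section
/- Let X ⊆ ℝᵈ be a nonempty closed convex set of diameter at most R. For t = 1,…,T let f_t : ℝᵈ → ℝ be convex and differentiable with ‖∇f_t(x)‖ ≤ G for all x ∈ X. Fix η > 0 and run projected online gradient descent x_{t+1} = Π_X(x_t − η·∇f_t(x_t)) from x₁ ∈ X. Then for every comparator sequence u₁, …, u_T ∈ X with path length D = Σ_{t=1}^{T−1} ‖u_{t+1} − u_t‖, the dynamic regret satisfies Σ_{t=1}^T (f_t(x_t) − f_t(u_t)) ≤ R²/(2η) + R·D/η + η·G²·T/2. -/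
open scoped RealInnerProductSpace

lemma convex_grad_ineq {d : ℕ} {f : EuclideanSpace ℝ (Fin d) → ℝ}
    (hconvf : ConvexOn ℝ Set.univ f) (hdiff : Differentiable ℝ f)
    (x y : EuclideanSpace ℝ (Fin d)) :
    f x + ⟪gradient f x, y - x⟫ ≤ f y := by
  set g : ℝ → ℝ := fun r => f (x + r • (y - x)) with hg
  have hcurve : ∀ r : ℝ, HasDerivAt (fun r : ℝ => x + r • (y - x)) (y - x) r := fun r => by
    simpa using ((hasDerivAt_id r).smul_const (y - x)).const_add x
  have hfd : HasFDerivAt f (InnerProductSpace.toDual ℝ _ (gradient f x)) x :=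
    hasGradientAt_iff_hasFDerivAt.mp (hdiff x).hasGradientAt
  have hd0 : HasDerivAt g (⟪gradient f x, y - x⟫) 0 := by
    have h := HasFDerivAt.comp_hasDerivAt (0:ℝ) (by simpa using hfd) (hcurve 0)
    convert h using 1
    · rfl
    · rfl
    · rfl
    · simp [gradient]
  have hgc : ConvexOn ℝ Set.univ g := by
    have h := hconvf.comp_affineMap (AffineMap.lineMap x y : ℝ →ᵃ[ℝ] _)
    simpa [Function.comp_def, AffineMap.lineMap_apply, g, add_comm] using h
  have hs := hgc.le_slope_of_hasDerivAt (Set.mem_univ (0:ℝ)) (Set.mem_univ 1) zero_lt_one hd0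
  have h1 : g 1 = f y := by simp [g]
  have h0 : g 0 = f x := by simp [g]
  rw [slope_def_field, h1, h0, show (1:ℝ) - 0 = 1 by norm_num, div_one] at hs
  linarith

lemma proj_nonexpansive {d : ℕ} {X : Set (EuclideanSpace ℝ (Fin d))} (hconv : Convex ℝ X)
    (proj : EuclideanSpace ℝ (Fin d) → EuclideanSpace ℝ (Fin d))
    (hproj_mem : ∀ z, proj z ∈ X)
    (hproj_min : ∀ z, ∀ y ∈ X, dist (proj z) z ≤ dist y z)
    (z : EuclideanSpace ℝ (Fin d)) {y : EuclideanSpace ℝ (Fin d)} (hy : y ∈ X) :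
    ‖proj z - y‖ ≤ ‖z - y‖ := by
  haveI : Nonempty X := ⟨⟨proj z, hproj_mem z⟩⟩
  have heq : ‖z - proj z‖ = ⨅ w : X, ‖z - (w : EuclideanSpace ℝ (Fin d))‖ := by
    apply le_antisymm
    · exact le_ciInf fun w => by
        simpa [dist_eq_norm, norm_sub_rev] using hproj_min z w w.2
    · have hbdd : BddBelow (Set.range fun w : X => ‖z - (w : EuclideanSpace ℝ (Fin d))‖) := by
        refine ⟨0, ?_⟩
        rintro b ⟨w, rfl⟩
        exact norm_nonneg _
      exact ciInf_le hbdd ⟨proj z, hproj_mem z⟩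
  have hvar := (norm_eq_iInf_iff_real_inner_le_zero hconv (hproj_mem z)).mp heq y hy
  have hexp : ‖z - y‖^2 = ‖z - proj z‖^2 + 2*⟪z - proj z, proj z - y⟫ + ‖proj z - y‖^2 := by
    have h : z - y = (z - proj z) + (proj z - y) := by abel
    rw [h, norm_add_sq_real]
  have h2 : 0 ≤ ⟪z - proj z, proj z - y⟫ := by
    have h : ⟪z - proj z, proj z - y⟫ = -⟪z - proj z, y - proj z⟫ := by
      rw [← inner_neg_right]; congr 1; abel
    rw [h]; linarith
  have hsq : ‖proj z - y‖^2 ≤ ‖z - y‖^2 := by nlinarith [sq_nonneg ‖z - proj z‖]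
  have h3 := Real.sqrt_le_sqrt hsq
  rwa [Real.sqrt_sq (norm_nonneg _), Real.sqrt_sq (norm_nonneg _)] at h3

/-- Dynamic regret bound for projected online gradient descent against a
drifting comparator sequence `u₁, …, u_T` with path length
`D = Σ_t ‖u_{t+1} − u_t‖`:
`Σ_{t<T} (f_t(x_t) − f_t(u_t)) ≤ R²/(2η) + RD/η + ηG²T/2`. -/
theorem ogd_dynamic_regret
    (d T : ℕ) (X : Set (EuclideanSpace ℝ (Fin d)))
    (hne : X.Nonempty) (hclosed : IsClosed X) (hconv : Convex ℝ X)
    (R G : ℝ)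
    (hdiam : ∀ u ∈ X, ∀ v ∈ X, ‖u - v‖ ≤ R)
    (f : ℕ → EuclideanSpace ℝ (Fin d) → ℝ)
    (hconvf : ∀ t, ConvexOn ℝ Set.univ (f t))
    (hdiff : ∀ t, Differentiable ℝ (f t))
    (hgrad : ∀ t, ∀ y ∈ X, ‖gradient (f t) y‖ ≤ G)
    (η : ℝ) (hη : 0 < η)
    (proj : EuclideanSpace ℝ (Fin d) → EuclideanSpace ℝ (Fin d))
    (hproj_mem : ∀ z, proj z ∈ X)
    (hproj_min : ∀ z, ∀ y ∈ X, dist (proj z) z ≤ dist y z)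
    (x : ℕ → EuclideanSpace ℝ (Fin d))
    (hx0 : x 0 ∈ X)
    (hrec : ∀ t, x (t + 1) = proj (x t - η • gradient (f t) (x t)))
    (u : ℕ → EuclideanSpace ℝ (Fin d))
    (hu : ∀ t < T, u t ∈ X) :
    ∑ t ∈ Finset.range T, (f t (x t) - f t (u t)) ≤
      R ^ 2 / (2 * η) +
        R * (∑ t ∈ Finset.range (T - 1), ‖u (t + 1) - u t‖) / η +
        η * G ^ 2 * T / 2 := by
  have hxX : ∀ t, x t ∈ X := by
    intro t
    induction t with
    | zero => exact hx0
    | succ n ih => rw [hrec n]; exact hproj_mem _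
  obtain ⟨p, hp⟩ := hne
  have hR0 : 0 ≤ R := le_trans (norm_nonneg (p - p)) (hdiam p hp p hp)
  have hG0 : 0 ≤ G := le_trans (norm_nonneg _) (hgrad 0 p hp)
  rcases Nat.eq_zero_or_pos T with rfl | hT
  · simp
    positivity
  obtain ⟨n, rfl⟩ := Nat.exists_eq_succ_of_ne_zero (Nat.pos_iff_ne_zero.mp hT)
  -- per-step bound
  have step : ∀ t < n + 1, f t (x t) - f t (u t) ≤
      (‖x t - u t‖^2 - ‖x (t+1) - u t‖^2)/(2*η) + η*G^2/2 := by
    intro t ht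
    set gt := gradient (f t) (x t) with hgt
    have hgrad_le : ‖gt‖ ≤ G := hgrad t (x t) (hxX t)
    have h1 : f t (x t) - f t (u t) ≤ ⟪gt, x t - u t⟫ := by
      have hci := convex_grad_ineq (hconvf t) (hdiff t) (x t) (u t)
      have hrw : ⟪gt, u t - x t⟫ = -⟪gt, x t - u t⟫ := by
        rw [← inner_neg_right]; congr 1; abel
      rw [← hgt] at hci
      rw [hrw] at hci
      linarith
    have hexp : ‖(x t - η • gt) - u t‖^2
        = ‖x t - u t‖^2 - 2*(η*⟪gt, x t - u t⟫) + (|η| * ‖gt‖)^2 := by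
      have h : (x t - η • gt) - u t = (x t - u t) - η • gt := by abel
      rw [h, norm_sub_sq_real, real_inner_smul_right, real_inner_comm, norm_smul,
        Real.norm_eq_abs]
    have hproj_le : ‖x (t+1) - u t‖ ≤ ‖(x t - η • gt) - u t‖ := by
      rw [hrec t]
      exact proj_nonexpansive hconv proj hproj_mem hproj_min _ (hu t ht)
    have hproj_sq : ‖x (t+1) - u t‖^2 ≤ ‖(x t - η • gt) - u t‖^2 :=
      pow_le_pow_left₀ (norm_nonneg _) hproj_le 2
    have hg_sq : ‖gt‖^2 ≤ G^2 := pow_le_pow_left₀ (norm_nonneg _) hgrad_le 2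
    have key : ⟪gt, x t - u t⟫
        = (‖x t - u t‖^2 - ‖(x t - η • gt) - u t‖^2)/(2*η) + η*‖gt‖^2/2 := by
      rw [hexp, abs_of_pos hη]
      field_simp
      ring
    calc f t (x t) - f t (u t) ≤ ⟪gt, x t - u t⟫ := h1
      _ = (‖x t - u t‖^2 - ‖(x t - η • gt) - u t‖^2)/(2*η) + η*‖gt‖^2/2 := key
      _ ≤ (‖x t - u t‖^2 - ‖x (t+1) - u t‖^2)/(2*η) + η*G^2/2 := by gcongr
  -- sum the per-step bounds
  have hsum1 : ∑ t ∈ Finset.range (n+1), (f t (x t) - f t (u t)) ≤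
      (∑ t ∈ Finset.range (n+1), (‖x t - u t‖^2 - ‖x (t+1) - u t‖^2))/(2*η)
        + ((n:ℝ)+1)*(η*G^2/2) := by
    calc ∑ t ∈ Finset.range (n+1), (f t (x t) - f t (u t))
        ≤ ∑ t ∈ Finset.range (n+1),
            ((‖x t - u t‖^2 - ‖x (t+1) - u t‖^2)/(2*η) + η*G^2/2) :=
          Finset.sum_le_sum fun t ht => step t (Finset.mem_range.mp ht)
      _ = (∑ t ∈ Finset.range (n+1), (‖x t - u t‖^2 - ‖x (t+1) - u t‖^2))/(2*η)
            + ((n:ℝ)+1)*(η*G^2/2) := by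
          rw [Finset.sum_add_distrib, Finset.sum_const, Finset.card_range, ← Finset.sum_div,
            nsmul_eq_mul]
          push_cast
          ring
  -- telescoping bound
  have htel : ∑ t ∈ Finset.range (n+1), (‖x t - u t‖^2 - ‖x (t+1) - u t‖^2) ≤
      R^2 + 2*R*(∑ t ∈ Finset.range n, ‖u (t+1) - u t‖) := by
    rw [Finset.sum_sub_distrib,
      Finset.sum_range_succ' (fun t => ‖x t - u t‖^2) n,
      Finset.sum_range_succ (fun t => ‖x (t+1) - u t‖^2) n]
    have h0 : ‖x 0 - u 0‖^2 ≤ R^2 :=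
      pow_le_pow_left₀ (norm_nonneg _) (hdiam _ (hxX 0) _ (hu 0 (Nat.succ_pos n))) 2
    have hlast : (0:ℝ) ≤ ‖x (n+1) - u n‖^2 := sq_nonneg _
    have hstep2 : ∀ t ∈ Finset.range n,
        ‖x (t+1) - u (t+1)‖^2 - 2*R*‖u (t+1) - u t‖ ≤ ‖x (t+1) - u t‖^2 := by
      intro t ht
      have htn := Finset.mem_range.mp ht
      have hu1 : u (t+1) ∈ X := hu _ (by omega)
      have hd : ‖x (t+1) - u (t+1)‖ ≤ R := hdiam _ (hxX _) _ hu1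
      have hexp2 : ‖x (t+1) - u t‖^2 = ‖x (t+1) - u (t+1)‖^2
          + 2*⟪x (t+1) - u (t+1), u (t+1) - u t⟫ + ‖u (t+1) - u t‖^2 := by
        have h : x (t+1) - u t = (x (t+1) - u (t+1)) + (u (t+1) - u t) := by abel
        rw [h, norm_add_sq_real]
      have habs := abs_real_inner_le_norm (x (t+1) - u (t+1)) (u (t+1) - u t)
      have hinner : -(‖x (t+1) - u (t+1)‖*‖u (t+1) - u t‖)
          ≤ ⟪x (t+1) - u (t+1), u (t+1) - u t⟫ := (abs_le.mp habs).1
      have hmul : ‖x (t+1) - u (t+1)‖ * ‖u (t+1) - u t‖ ≤ R * ‖u (t+1) - u t‖ :=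
        mul_le_mul_of_nonneg_right hd (norm_nonneg _)
      nlinarith [sq_nonneg ‖u (t+1) - u t‖]
    have hsum2 : ∑ t ∈ Finset.range n, ‖x (t+1) - u (t+1)‖^2
        - ∑ t ∈ Finset.range n, (2*R*‖u (t+1) - u t‖)
        ≤ ∑ t ∈ Finset.range n, ‖x (t+1) - u t‖^2 := by
      rw [← Finset.sum_sub_distrib]
      exact Finset.sum_le_sum hstep2
    have hconst : ∑ t ∈ Finset.range n, (2*R*‖u (t+1) - u t‖)
        = 2*R*(∑ t ∈ Finset.range n, ‖u (t+1) - u t‖) := by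
      rw [Finset.mul_sum]
    rw [hconst] at hsum2
    linarith
  -- combine
  have hdiv : (∑ t ∈ Finset.range (n+1), (‖x t - u t‖^2 - ‖x (t+1) - u t‖^2))/(2*η)
      ≤ (R^2 + 2*R*(∑ t ∈ Finset.range n, ‖u (t+1) - u t‖))/(2*η) := by
    gcongr
  have hfin : (R^2 + 2*R*(∑ t ∈ Finset.range n, ‖u (t+1) - u t‖))/(2*η) + ((n:ℝ)+1)*(η*G^2/2)
      = R^2/(2*η) + R*(∑ t ∈ Finset.range n, ‖u (t+1) - u t‖)/η + η*G^2*((n:ℝ)+1)/2 := by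
    field_simp
  have hgoal : ∑ t ∈ Finset.range (n+1), (f t (x t) - f t (u t)) ≤
      R^2/(2*η) + R*(∑ t ∈ Finset.range n, ‖u (t+1) - u t‖)/η + η*G^2*((n:ℝ)+1)/2 := by
    linarith
  simpa [Nat.succ_sub_one] using hgoal
end

section
/- Let Σ ∈ ℝⁿˣⁿ be symmetric with m·‖x‖² ≤ xᵀΣx ≤ M·‖x‖² for all x ∈ ℝⁿ, where 0 < m ≤ M, let μ, c ∈ ℝⁿ, and let θ₀ > 0. For θ ≥ θ₀ let x*(θ) denote the (unique) maximizer of f_θ(x) = μᵀx − (θ/2)·xᵀΣx − cᵀx over the standard simplex X = {x ∈ ℝⁿ : 𝟙ᵀx = 1, x ≥ 0}. Then for all θ₁, θ₂ ≥ θ₀, ‖x*(θ₁) − x*(θ₂)‖ ≤ |θ₁ − θ₂|·M/(θ₀·m). -/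
open Matrix

set_option maxHeartbeats 1000000

/-- Lipschitz dependence of the optimal portfolio on the risk-aversion
parameter: if `Σ` is symmetric with `m‖x‖² ≤ xᵀΣx ≤ M‖x‖²` (`0 < m ≤ M`) and
`x*(θ)` maximizes `f_θ(x) = μᵀx − (θ/2)xᵀΣx − cᵀx` over the simplex for each
`θ ≥ θ₀ > 0`, then `‖x*(θ₁) − x*(θ₂)‖ ≤ |θ₁ − θ₂| M/(θ₀ m)`. -/
theorem optimal_portfolio_lipschitz_in_theta
    (n : ℕ) (S : Matrix (Fin n) (Fin n) ℝ) (hSym : S.IsSymm)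
    (m M : ℝ) (hm : 0 < m) (hmM : m ≤ M)
    (hlb : ∀ x : EuclideanSpace ℝ (Fin n), m * ‖x‖ ^ 2 ≤ x ⬝ᵥ S.mulVec x)
    (hub : ∀ x : EuclideanSpace ℝ (Fin n), x ⬝ᵥ S.mulVec x ≤ M * ‖x‖ ^ 2)
    (μ c : Fin n → ℝ) (θ₀ : ℝ) (hθ₀ : 0 < θ₀)
    (xs : ℝ → EuclideanSpace ℝ (Fin n))
    (hmem : ∀ θ, θ₀ ≤ θ → (∑ i, xs θ i) = 1 ∧ ∀ i, 0 ≤ xs θ i)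
    (hmax : ∀ θ, θ₀ ≤ θ → ∀ x : EuclideanSpace ℝ (Fin n),
        ((∑ i, x i) = 1 ∧ ∀ i, 0 ≤ x i) →
        μ ⬝ᵥ x - θ / 2 * (x ⬝ᵥ S.mulVec x) - c ⬝ᵥ x ≤
          μ ⬝ᵥ (xs θ) - θ / 2 * (xs θ ⬝ᵥ S.mulVec (xs θ)) - c ⬝ᵥ (xs θ)) :
    ∀ θ₁ θ₂, θ₀ ≤ θ₁ → θ₀ ≤ θ₂ →
      ‖xs θ₁ - xs θ₂‖ ≤ |θ₁ - θ₂| * M / (θ₀ * m) := by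
  have hsymm : ∀ u v : Fin n → ℝ, u ⬝ᵥ S.mulVec v = v ⬝ᵥ S.mulVec u := by
    intro u v
    rw [Matrix.dotProduct_mulVec, ← Matrix.mulVec_transpose, hSym.eq, dotProduct_comm]
  have hns : ∀ x : EuclideanSpace ℝ (Fin n), ‖x‖^2 = x ⬝ᵥ x := by
    intro x
    rw [EuclideanSpace.norm_eq, Real.sq_sqrt (by positivity)]
    simp [dotProduct, sq]
  have hQ0 : ∀ v : Fin n → ℝ, 0 ≤ v ⬝ᵥ S.mulVec v := by
    intro v
    exact le_trans (by positivity) (hlb (WithLp.toLp 2 v))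
  -- strong concavity of the maximizer
  have hstrong : ∀ θ, θ₀ ≤ θ → ∀ y : EuclideanSpace ℝ (Fin n),
      ((∑ i, y i) = 1 ∧ ∀ i, 0 ≤ y i) →
      μ ⬝ᵥ y - θ / 2 * (y ⬝ᵥ S.mulVec y) - c ⬝ᵥ y + θ * m / 2 * ‖y - xs θ‖^2 ≤
        μ ⬝ᵥ (xs θ) - θ / 2 * (xs θ ⬝ᵥ S.mulVec (xs θ)) - c ⬝ᵥ (xs θ) := by
    intro θ hθ y hy
    have hθpos : (0:ℝ) < θ := lt_of_lt_of_le hθ₀ hθ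
    set X : Fin n → ℝ := (xs θ).ofLp with hXdef
    set Y : Fin n → ℝ := y.ofLp with hYdef
    set D : Fin n → ℝ := Y - X with hDdef
    have hDE : (y - xs θ : EuclideanSpace ℝ (Fin n)).ofLp = D := rfl
    have hYXD : Y = X + D := by rw [hDdef]; ring
    set Bq : ℝ := D ⬝ᵥ S.mulVec D with hBqdef
    have hBq0 : 0 ≤ Bq := hQ0 D
    set A : ℝ := μ ⬝ᵥ D - c ⬝ᵥ D - θ * (X ⬝ᵥ S.mulVec D) with hAdef
    have hkey : ∀ t : ℝ, 0 < t → t ≤ 1 → t * A ≤ t^2 * (θ/2) * Bq := by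
      intro t ht0 ht1
      have hz : ((∑ i, (X + t • D) i) = 1 ∧ ∀ i, 0 ≤ (X + t • D) i) := by
        constructor
        · have hsx := (hmem θ hθ).1
          have hsy := hy.1
          have hexp : ∑ i, (X + t • D) i = (∑ i, X i) + t * ((∑ i, Y i) - (∑ i, X i)) := by
            simp [hDdef, Finset.sum_add_distrib, Finset.mul_sum, mul_sub,
              Finset.sum_sub_distrib]
          rw [hexp, hsx, hsy]; ring
        · intro i
          have h1 : (X + t • D) i = (1 - t) * X i + t * Y i := by
            simp [hDdef]; ring
          have h2 := (hmem θ hθ).2 i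
          have h3 := hy.2 i
          rw [h1]; exact add_nonneg (mul_nonneg (by linarith) h2) (mul_nonneg ht0.le h3)
      have hle : μ ⬝ᵥ (X + t • D) - θ / 2 * ((X + t • D) ⬝ᵥ S.mulVec (X + t • D))
            - c ⬝ᵥ (X + t • D) ≤ μ ⬝ᵥ X - θ / 2 * (X ⬝ᵥ S.mulVec X) - c ⬝ᵥ X :=
        hmax θ hθ (WithLp.toLp 2 (X + t • D)) hz
      have hexp : μ ⬝ᵥ (X + t • D) - θ / 2 * ((X + t • D) ⬝ᵥ S.mulVec (X + t • D))
            - c ⬝ᵥ (X + t • D)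
          = (μ ⬝ᵥ X - θ / 2 * (X ⬝ᵥ S.mulVec X) - c ⬝ᵥ X) + t * A - t^2 * (θ/2) * Bq := by
        rw [hAdef, hBqdef]
        rw [Matrix.mulVec_add, Matrix.mulVec_smul]
        simp only [dotProduct_add, add_dotProduct, dotProduct_smul, smul_dotProduct,
          smul_eq_mul]
        linear_combination (t*θ/2) * hsymm X D
      rw [hexp] at hle
      linarith
    have hA0 : A ≤ 0 := by
      by_contra hc
      push_neg at hc
      set t : ℝ := min 1 (A / (θ * Bq + 1)) with htdef
      have ht0 : 0 < t := lt_min one_pos (by positivity)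
      have ht1 : t ≤ 1 := min_le_left _ _
      have ht2 : t ≤ A / (θ * Bq + 1) := min_le_right _ _
      have hk := hkey t ht0 ht1
      have h1 : t * (θ * Bq + 1) ≤ A := by
        rw [← le_div_iff₀ (by positivity)]
        exact ht2
      nlinarith [mul_pos ht0 hc, sq_nonneg t, mul_le_mul_of_nonneg_right ht1 (mul_nonneg ht0.le (mul_nonneg (by positivity : (0:ℝ) ≤ θ/2) hBq0))]
    have hy_exp : μ ⬝ᵥ Y - θ / 2 * (Y ⬝ᵥ S.mulVec Y) - c ⬝ᵥ Y
        = (μ ⬝ᵥ X - θ / 2 * (X ⬝ᵥ S.mulVec X) - c ⬝ᵥ X) + A - (θ/2) * Bq := by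
      rw [hAdef, hBqdef, hYXD]
      rw [Matrix.mulVec_add]
      simp only [dotProduct_add, add_dotProduct]
      linear_combination (θ/2) * hsymm X D
    have hlbd := hlb (y - xs θ)
    rw [hDE] at hlbd
    show μ ⬝ᵥ Y - θ / 2 * (Y ⬝ᵥ S.mulVec Y) - c ⬝ᵥ Y + θ * m / 2 * ‖y - xs θ‖^2 ≤
        μ ⬝ᵥ X - θ / 2 * (X ⬝ᵥ S.mulVec X) - c ⬝ᵥ X
    rw [hy_exp]
    have hnn : 0 ≤ ‖y - xs θ‖^2 := by positivity
    nlinarith [mul_le_mul_of_nonneg_left hlbd (le_of_lt (half_pos hθpos))]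
  -- Cauchy–Schwarz for the bilinear form
  have hCS : ∀ u v : Fin n → ℝ,
      (u ⬝ᵥ S.mulVec v)^2 ≤ (u ⬝ᵥ S.mulVec u) * (v ⬝ᵥ S.mulVec v) := by
    intro u v
    have key : ∀ t : ℝ, 0 ≤ (v ⬝ᵥ S.mulVec v) * (t * t) + (2 * (u ⬝ᵥ S.mulVec v)) * t
        + (u ⬝ᵥ S.mulVec u) := by
      intro t
      have h0 := hQ0 (u + t • v)
      have hexp : (u + t • v) ⬝ᵥ S.mulVec (u + t • v)
          = (v ⬝ᵥ S.mulVec v) * (t * t) + (2*(u ⬝ᵥ S.mulVec v))*t + (u ⬝ᵥ S.mulVec u) := by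
        rw [Matrix.mulVec_add, Matrix.mulVec_smul]
        simp only [dotProduct_add, add_dotProduct, dotProduct_smul, smul_dotProduct,
          smul_eq_mul]
        linear_combination t * hsymm v u
      linarith [hexp ▸ h0]
    have hd := discrim_le_zero key
    rw [discrim] at hd
    nlinarith [hd]
  intro θ₁ θ₂ h1 h2
  have H1 := hstrong θ₁ h1 (xs θ₂) (hmem θ₂ h2)
  have H2 := hstrong θ₂ h2 (xs θ₁) (hmem θ₁ h1)
  have hrev : ‖xs θ₁ - xs θ₂‖ = ‖xs θ₂ - xs θ₁‖ := norm_sub_rev _ _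
  rw [hrev] at H2 ⊢
  have key : (θ₁ + θ₂) * m / 2 * ‖xs θ₂ - xs θ₁‖^2 ≤
      (θ₁ - θ₂) / 2 * ((xs θ₂ ⬝ᵥ S.mulVec (xs θ₂)) - (xs θ₁ ⬝ᵥ S.mulVec (xs θ₁))) := by
    nlinarith [H1, H2]
  set R : ℝ := ‖xs θ₂ - xs θ₁‖ with hRdef
  have hR0 : 0 ≤ R := norm_nonneg _
  set D : Fin n → ℝ := fun i => xs θ₂ i - xs θ₁ i with hDdef
  set W : Fin n → ℝ := fun i => xs θ₁ i + xs θ₂ i with hWdef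
  have hiden : ∀ u v : Fin n → ℝ, v ⬝ᵥ S.mulVec v - u ⬝ᵥ S.mulVec u
      = (fun i => v i - u i) ⬝ᵥ S.mulVec (fun i => u i + v i) := by
    intro u v
    have e1 : (fun i => v i - u i) = v - u := rfl
    have e2 : (fun i => u i + v i) = u + v := rfl
    rw [e1, e2, Matrix.mulVec_add]
    simp only [sub_dotProduct, dotProduct_add]
    linear_combination hsymm u v
  have hQdiff : (xs θ₂ ⬝ᵥ S.mulVec (xs θ₂)) - (xs θ₁ ⬝ᵥ S.mulVec (xs θ₁))
      = D ⬝ᵥ S.mulVec W := hiden (xs θ₁) (xs θ₂)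
  have hRD : R^2 = D ⬝ᵥ D := by
    rw [hRdef, hns]; rfl
  have hDD : D ⬝ᵥ S.mulVec D ≤ M * R^2 := hub (xs θ₂ - xs θ₁)
  have hone : ∀ θ, θ₀ ≤ θ → ∀ i, xs θ i ≤ 1 := by
    intro θ hθ i
    calc xs θ i ≤ ∑ j, xs θ j :=
          Finset.single_le_sum (fun j _ => (hmem θ hθ).2 j) (Finset.mem_univ i)
      _ = 1 := (hmem θ hθ).1
  have hWW : W ⬝ᵥ W ≤ 4 := by
    have : W ⬝ᵥ W ≤ ∑ i, 2 * (xs θ₁ i + xs θ₂ i) := by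
      refine Finset.sum_le_sum fun i _ => ?_
      have := (hmem θ₁ h1).2 i
      have := (hmem θ₂ h2).2 i
      have := hone θ₁ h1 i
      have := hone θ₂ h2 i
      simp only [hWdef]
      nlinarith
    have hsum2 : ∑ i, 2 * (xs θ₁ i + xs θ₂ i)
        = 2 * ((∑ i, xs θ₁ i) + (∑ i, xs θ₂ i)) := by
      rw [← Finset.mul_sum, Finset.sum_add_distrib]
    rw [hsum2, (hmem θ₁ h1).1, (hmem θ₂ h2).1] at this
    linarith
  have hWE : (xs θ₁ + xs θ₂ : EuclideanSpace ℝ (Fin n)).ofLp ⬝ᵥ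
      S.mulVec (xs θ₁ + xs θ₂ : EuclideanSpace ℝ (Fin n)).ofLp = W ⬝ᵥ S.mulVec W := rfl
  have hWn : ‖(xs θ₁ + xs θ₂ : EuclideanSpace ℝ (Fin n))‖^2 = W ⬝ᵥ W := by
    rw [hns]; rfl
  have hWQ : W ⬝ᵥ S.mulVec W ≤ 4 * M := by
    have := hub (xs θ₁ + xs θ₂)
    rw [hWE, hWn] at this
    nlinarith [lt_of_lt_of_le hm hmM]
  have hMpos : (0:ℝ) < M := lt_of_lt_of_le hm hmM
  have hcs := hCS D W
  have hsq : (D ⬝ᵥ S.mulVec W)^2 ≤ (2*M*R)^2 := by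
    have hq1 : 0 ≤ D ⬝ᵥ S.mulVec D := hQ0 D
    have hq2 : 0 ≤ W ⬝ᵥ S.mulVec W := hQ0 W
    nlinarith [mul_le_mul hDD hWQ hq2 (by positivity : (0:ℝ) ≤ M * R^2)]
  have habs : |D ⬝ᵥ S.mulVec W| ≤ 2*M*R :=
    abs_le.mpr (abs_le_of_sq_le_sq' hsq (by positivity))
  have hlin : (θ₁ - θ₂) * (D ⬝ᵥ S.mulVec W) ≤ |θ₁ - θ₂| * (2*M*R) :=
    calc (θ₁ - θ₂) * (D ⬝ᵥ S.mulVec W) ≤ |(θ₁ - θ₂) * (D ⬝ᵥ S.mulVec W)| := le_abs_self _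
      _ = |θ₁ - θ₂| * |D ⬝ᵥ S.mulVec W| := abs_mul _ _
      _ ≤ |θ₁ - θ₂| * (2*M*R) := mul_le_mul_of_nonneg_left habs (abs_nonneg _)
  have hfinal : θ₀ * m * R^2 ≤ |θ₁ - θ₂| * M * R := by
    rw [hQdiff] at key
    have hext : 0 ≤ (θ₁ + θ₂ - 2*θ₀) * m * R^2 :=
      mul_nonneg (mul_nonneg (by linarith) hm.le) (sq_nonneg R)
    linarith [key, hlin, hext]
  rcases eq_or_lt_of_le hR0 with h | h
  · rw [← h]
    positivity
  · rw [le_div_iff₀ (by positivity)]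
    nlinarith
end

section
/- Let Σ ∈ ℝⁿˣⁿ be symmetric with m·‖x‖² ≤ xᵀΣx ≤ M·‖x‖² for all x ∈ ℝⁿ, where 0 < m ≤ M, let μ, c ∈ ℝⁿ, and let θ₀ > 0. For θ ≥ θ₀ let x*(θ) denote the unique maximizer of f_θ(x) = μᵀx − (θ/2)·xᵀΣx − cᵀx over the standard simplex X = {x ∈ ℝⁿ : 𝟙ᵀx = 1, x ≥ 0}. Then for all θ*, θ̂ ≥ θ₀, the utility gap satisfies 0 ≤ f_{θ*}(x*(θ*)) − f_{θ*}(x*(θ̂)) ≤ (‖μ‖ + ‖c‖ + θ*·M)·M·|θ* − θ̂|/(θ₀·m). -/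
open Matrix

/-- Utility-gap (welfare loss) bound under risk-aversion misspecification:
with `Σ` symmetric, `m‖x‖² ≤ xᵀΣx ≤ M‖x‖²` (`0 < m ≤ M`), and `x*(θ)` the
maximizer of `f_θ(x) = μᵀx − (θ/2)xᵀΣx − cᵀx` over the simplex for `θ ≥ θ₀ > 0`,
the welfare loss satisfies
`0 ≤ f_{θ*}(x*(θ*)) − f_{θ*}(x*(θ̂)) ≤ (‖μ‖ + ‖c‖ + θ*M)·M·|θ* − θ̂|/(θ₀ m)`. -/
theorem utility_gap_bound
    (n : ℕ) (S : Matrix (Fin n) (Fin n) ℝ) (hSym : S.IsSymm)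
    (m M : ℝ) (hm : 0 < m) (hmM : m ≤ M)
    (hlb : ∀ x : EuclideanSpace ℝ (Fin n), m * ‖x‖ ^ 2 ≤ x ⬝ᵥ S.mulVec x)
    (hub : ∀ x : EuclideanSpace ℝ (Fin n), x ⬝ᵥ S.mulVec x ≤ M * ‖x‖ ^ 2)
    (μ c : EuclideanSpace ℝ (Fin n)) (θ₀ : ℝ) (hθ₀ : 0 < θ₀)
    (xs : ℝ → EuclideanSpace ℝ (Fin n))
    (hmem : ∀ θ, θ₀ ≤ θ → (∑ i, xs θ i) = 1 ∧ ∀ i, 0 ≤ xs θ i)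
    (hmax : ∀ θ, θ₀ ≤ θ → ∀ x : EuclideanSpace ℝ (Fin n),
        ((∑ i, x i) = 1 ∧ ∀ i, 0 ≤ x i) →
        μ ⬝ᵥ x - θ / 2 * (x ⬝ᵥ S.mulVec x) - c ⬝ᵥ x ≤
          μ ⬝ᵥ (xs θ) - θ / 2 * (xs θ ⬝ᵥ S.mulVec (xs θ)) - c ⬝ᵥ (xs θ))
    (huniq : ∀ θ, θ₀ ≤ θ → ∀ x : EuclideanSpace ℝ (Fin n),
        ((∑ i, x i) = 1 ∧ ∀ i, 0 ≤ x i) →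
        (μ ⬝ᵥ x - θ / 2 * (x ⬝ᵥ S.mulVec x) - c ⬝ᵥ x =
          μ ⬝ᵥ (xs θ) - θ / 2 * (xs θ ⬝ᵥ S.mulVec (xs θ)) - c ⬝ᵥ (xs θ)) →
        x = xs θ) :
    ∀ θstar θhat, θ₀ ≤ θstar → θ₀ ≤ θhat →
      0 ≤ (μ ⬝ᵥ (xs θstar) - θstar / 2 * (xs θstar ⬝ᵥ S.mulVec (xs θstar)) -
              c ⬝ᵥ (xs θstar)) -
          (μ ⬝ᵥ (xs θhat) - θstar / 2 * (xs θhat ⬝ᵥ S.mulVec (xs θhat)) -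
              c ⬝ᵥ (xs θhat)) ∧
      (μ ⬝ᵥ (xs θstar) - θstar / 2 * (xs θstar ⬝ᵥ S.mulVec (xs θstar)) -
              c ⬝ᵥ (xs θstar)) -
          (μ ⬝ᵥ (xs θhat) - θstar / 2 * (xs θhat ⬝ᵥ S.mulVec (xs θhat)) -
              c ⬝ᵥ (xs θhat)) ≤
        (‖μ‖ + ‖c‖ + θstar * M) * M * |θstar - θhat| / (θ₀ * m) := by
  intro θstar θhat hs hh
  -- quadratic form bounds on the simplex
  have key : ∀ θ, θ₀ ≤ θ →
      0 ≤ xs θ ⬝ᵥ S.mulVec (xs θ) ∧ xs θ ⬝ᵥ S.mulVec (xs θ) ≤ M := by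
    intro θ hθ
    obtain ⟨hsum, hpos⟩ := hmem θ hθ
    have hn : ‖xs θ‖ ^ 2 = ∑ i, (xs θ i) ^ 2 := by
      rw [EuclideanSpace.norm_eq, Real.sq_sqrt (by positivity)]
      simp [Real.norm_eq_abs, sq_abs]
    have hle1 : ‖xs θ‖ ^ 2 ≤ 1 := by
      rw [hn, ← hsum]
      apply Finset.sum_le_sum
      intro i _
      have hxi1 : xs θ i ≤ 1 := by
        rw [← hsum]
        exact Finset.single_le_sum (fun j _ => hpos j) (Finset.mem_univ i)
      nlinarith [hpos i]
    refine ⟨le_trans (by positivity) (hlb (xs θ)), le_trans (hub (xs θ)) ?_⟩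
    nlinarith [hmM, hm.le]
  obtain ⟨hA0, hAM⟩ := key θstar hs
  obtain ⟨hB0, hBM⟩ := key θhat hh
  set A := xs θstar ⬝ᵥ S.mulVec (xs θstar) with hA
  set B := xs θhat ⬝ᵥ S.mulVec (xs θhat) with hB
  have h1 := hmax θstar hs (xs θhat) (hmem θhat hh)
  have h2 := hmax θhat hh (xs θstar) (hmem θstar hs)
  constructor
  · linarith
  · -- ΔU ≤ (θhat - θstar)/2 * (A - B) ≤ |Δθ| * M / 2 ≤ RHS
    have habs : (θhat - θstar) * (A - B) ≤ |θstar - θhat| * M := by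
      calc (θhat - θstar) * (A - B) ≤ |(θhat - θstar) * (A - B)| := le_abs_self _
        _ = |θstar - θhat| * |A - B| := by rw [abs_mul, abs_sub_comm θhat θstar]
        _ ≤ |θstar - θhat| * M := by
            apply mul_le_mul_of_nonneg_left _ (abs_nonneg _)
            exact abs_le.mpr ⟨by linarith, by linarith⟩
    have hRHS : |θstar - θhat| * M ≤
        (‖μ‖ + ‖c‖ + θstar * M) * M * |θstar - θhat| / (θ₀ * m) := by
      rw [le_div_iff₀ (by positivity)]
      have h3 : θ₀ * m ≤ θstar * M :=
        mul_le_mul hs hmM hm.le (le_trans hθ₀.le hs)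
      nlinarith [abs_nonneg (θstar - θhat), norm_nonneg μ, norm_nonneg c,
        mul_nonneg (mul_nonneg (abs_nonneg (θstar - θhat)) (le_trans hm.le hmM)) hθ₀.le]
    nlinarith [abs_nonneg (θstar - θhat), le_trans hm.le hmM]
end
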